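/- Let F(X) = f(λ(X)) be a Schur-convex spectral function on n×n real symmetric matrices, let A, B be symmetric, and let X̄ be a symmetric matrix with λ(X̄) = λ(B) such that −A and X̄ strongly commute. Then X̄ is a global maximizer of F(X − A) over {X symmetric : λ(X) = λ(B)}. -/

import Mathlib

open Finset

/-- Decreasing rearrangement of a vector in ℝⁿ. -/
noncomputable def dsort {n : ℕ} (u : Fin n → ℝ) : Fin n → ℝ :=
  u ∘ Tuple.sort (fun i => -u i)

/-- `Maj u v` : `u` is majorized by `v`. -/
def Maj {n : ℕ} (u v : Fin n → ℝ) : Prop :=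
  (∀ k : ℕ, ∑ i ∈ univ.filter (fun i : Fin n => (i : ℕ) < k), dsort u i ≤
      ∑ i ∈ univ.filter (fun i : Fin n => (i : ℕ) < k), dsort v i) ∧
  ∑ i, u i = ∑ i, v i

open Matrix

/-- Decreasingly ordered eigenvalue vector of a real symmetric matrix. -/
noncomputable def specVec {n : ℕ} {A : Matrix (Fin n) (Fin n) ℝ} (hA : A.IsHermitian) :
    Fin n → ℝ :=
  dsort hA.eigenvalues

/-- `A` and `B` strongly commute: a common orthonormal eigenbasis realizing both
decreasingly ordered spectra simultaneously. -/
def StrongCommute {n : ℕ} {A B : Matrix (Fin n) (Fin n) ℝ}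
    (hA : A.IsHermitian) (hB : B.IsHermitian) : Prop :=
  ∃ U : Matrix (Fin n) (Fin n) ℝ, U * Uᵀ = 1 ∧
    Uᵀ * A * U = Matrix.diagonal (specVec hA) ∧
    Uᵀ * B * U = Matrix.diagonal (specVec hB)

/- ## dsort lemmas -/

lemma antitone_dsort {n : ℕ} (u : Fin n → ℝ) : Antitone (dsort u) := by
  intro i j hij
  have := Tuple.monotone_sort (fun i => -u i) hij
  simpa [dsort] using this

lemma dsort_eq_self_of_antitone {n : ℕ} {u : Fin n → ℝ} (h : Antitone u) : dsort u = u := by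
  have hm : Monotone ((fun i => -u i) ∘ (Equiv.refl (Fin n))) := by
    intro i j hij; simpa using h hij
  have huq := Tuple.unique_monotone (f := fun i => -u i)
    (σ := Tuple.sort (fun i => -u i)) (τ := Equiv.refl _)
    (Tuple.monotone_sort _) hm
  funext i
  have h2 := congrFun huq i
  simp only [Function.comp, Equiv.refl_apply] at h2
  have : u (Tuple.sort (fun i => -u i) i) = u i := by linarith [neg_inj.mp h2]
  simpa [dsort] using this

lemma multiset_comp_perm {n : ℕ} (u : Fin n → ℝ) (σ : Equiv.Perm (Fin n)) :
    Multiset.map (u ∘ σ) Finset.univ.val = Multiset.map u Finset.univ.val := by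
  rw [show Multiset.map (u ∘ σ) Finset.univ.val
      = Multiset.map u (Multiset.map σ Finset.univ.val) by rw [Multiset.map_map]]
  congr 1
  have : Finset.univ.map σ.toEmbedding = Finset.univ := Finset.map_univ_equiv σ
  simpa [Finset.map] using congrArg Finset.val this

lemma multiset_dsort {n : ℕ} (u : Fin n → ℝ) :
    Multiset.map (dsort u) Finset.univ.val = Multiset.map u Finset.univ.val :=
  multiset_comp_perm u _

lemma multiset_ofFn {n : ℕ} (u : Fin n → ℝ) :
    ((List.ofFn u : List ℝ) : Multiset ℝ) = Multiset.map u Finset.univ.val := by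
  rw [List.ofFn_eq_map]; rfl

lemma eq_of_antitone_of_multiset_eq {n : ℕ} {u v : Fin n → ℝ}
    (hu : Antitone u) (hv : Antitone v)
    (h : Multiset.map u Finset.univ.val = Multiset.map v Finset.univ.val) : u = v := by
  have hp : List.Perm (List.ofFn u) (List.ofFn v) := by
    rw [← Multiset.coe_eq_coe, multiset_ofFn, multiset_ofFn]; exact h
  have hsu : (List.ofFn u).SortedGE := by
    rw [List.sortedGE_ofFn_iff]; exact hu
  have hsv : (List.ofFn v).SortedGE := by
    rw [List.sortedGE_ofFn_iff]; exact hv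
  exact List.ofFn_injective (List.Perm.eq_of_sortedGE hsu hsv hp)

lemma sum_dsort {n : ℕ} (u : Fin n → ℝ) : ∑ i, dsort u i = ∑ i, u i := by
  simpa [dsort] using Equiv.sum_comp (Tuple.sort (fun i => -u i)) u

/- ## permutation matrices -/

def permMat {n : ℕ} (σ : Equiv.Perm (Fin n)) : Matrix (Fin n) (Fin n) ℝ :=
  Matrix.of fun i j => if σ j = i then 1 else 0

lemma permMat_T_mul_self {n : ℕ} (σ : Equiv.Perm (Fin n)) :
    (permMat σ)ᵀ * permMat σ = 1 := by
  ext j k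
  simp only [mul_apply, transpose_apply, permMat, of_apply, one_apply, ite_mul, one_mul,
    zero_mul, Finset.sum_ite_eq, Finset.mem_univ, if_true]
  simp [σ.injective.eq_iff, eq_comm]

lemma permMat_T_diag_mul {n : ℕ} (σ : Equiv.Perm (Fin n)) (d : Fin n → ℝ) :
    (permMat σ)ᵀ * Matrix.diagonal d * permMat σ = Matrix.diagonal (d ∘ σ) := by
  ext j k
  simp only [mul_apply, transpose_apply, permMat, of_apply, diagonal_apply, ite_mul, one_mul,
    zero_mul, mul_ite, mul_one, mul_zero]
  simp only [Finset.sum_ite_eq, Finset.mem_univ, if_true]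
  simp only [Finset.sum_ite_eq', Finset.mem_univ, if_true]
  by_cases h : j = k <;> simp [h]

/- ## spectral decomposition realizing specVec -/

lemma spectral' {n : ℕ} {M : Matrix (Fin n) (Fin n) ℝ} (hM : M.IsHermitian) :
    ∃ Q : Matrix (Fin n) (Fin n) ℝ, Qᵀ * Q = 1 ∧ Q * Qᵀ = 1 ∧
      Qᵀ * M * Q = Matrix.diagonal (specVec hM) := by
  classical
  set V : Matrix (Fin n) (Fin n) ℝ := (hM.eigenvectorUnitary : Matrix (Fin n) (Fin n) ℝ)
  have hV : Vᵀ * M * V = Matrix.diagonal hM.eigenvalues := by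
    have := hM.conjStarAlgAut_star_eigenvectorUnitary
    simpa [V, Unitary.conjStarAlgAut_star_apply, Matrix.star_eq_conjTranspose, Matrix.mul_assoc] using this
  have hVT : Vᵀ * V = 1 := by
    have := (Matrix.mem_unitaryGroup_iff').mp hM.eigenvectorUnitary.2
    simpa [Matrix.star_eq_conjTranspose] using this
  set σ := Tuple.sort (fun i => -(hM.eigenvalues i))
  have h1 : (V * permMat σ)ᵀ * (V * permMat σ) = 1 := by
    rw [Matrix.transpose_mul]
    calc (permMat σ)ᵀ * Vᵀ * (V * permMat σ)
        = (permMat σ)ᵀ * (Vᵀ * V) * permMat σ := by simp only [Matrix.mul_assoc]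
      _ = 1 := by rw [hVT, mul_one, permMat_T_mul_self]
  refine ⟨V * permMat σ, h1, mul_eq_one_comm.mp h1, ?_⟩
  rw [Matrix.transpose_mul]
  calc (permMat σ)ᵀ * Vᵀ * M * (V * permMat σ)
      = (permMat σ)ᵀ * (Vᵀ * M * V) * permMat σ := by simp only [Matrix.mul_assoc]
    _ = Matrix.diagonal (hM.eigenvalues ∘ σ) := by rw [hV, permMat_T_diag_mul]
    _ = Matrix.diagonal (specVec hM) := rfl

lemma antitone_specVec {n : ℕ} {M : Matrix (Fin n) (Fin n) ℝ} (hM : M.IsHermitian) :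
    Antitone (specVec hM) := antitone_dsort _

lemma dsort_specVec {n : ℕ} {M : Matrix (Fin n) (Fin n) ℝ} (hM : M.IsHermitian) :
    dsort (specVec hM) = specVec hM := dsort_eq_self_of_antitone (antitone_specVec hM)

/- ## uniqueness: orthogonally-diagonalized with antitone diagonal determines specVec -/

lemma specVec_eq_of_conj {n : ℕ} {M : Matrix (Fin n) (Fin n) ℝ} (hM : M.IsHermitian)
    {U : Matrix (Fin n) (Fin n) ℝ} {w : Fin n → ℝ}
    (hU : U * Uᵀ = 1) (h : Uᵀ * M * U = Matrix.diagonal w) (hw : Antitone w) :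
    specVec hM = w := by
  classical
  obtain ⟨Q, hQ1, hQ2, hQ3⟩ := spectral' hM
  have hUT : Uᵀ * U = 1 := mul_eq_one_comm.mp hU
  -- M = U * diagonal w * Uᵀ
  have hMU : M = U * Matrix.diagonal w * Uᵀ := by
    rw [← h]
    calc M = (U * Uᵀ) * M * (U * Uᵀ) := by rw [hU]; simp
      _ = U * (Uᵀ * M * U) * Uᵀ := by simp only [Matrix.mul_assoc]
  -- diagonal (specVec hM) = R * diagonal w * Rᵀ with R = Qᵀ * U
  set R := Qᵀ * U with hR
  have hRT : R * Rᵀ = 1 := by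
    rw [hR, Matrix.transpose_mul, Matrix.transpose_transpose]
    calc Qᵀ * U * (Uᵀ * Q) = Qᵀ * (U * Uᵀ) * Q := by simp only [Matrix.mul_assoc]
      _ = 1 := by rw [hU, mul_one, hQ1]
  have hconj : Matrix.diagonal (specVec hM) = R * Matrix.diagonal w * Rᵀ := by
    rw [← hQ3, hMU, hR]
    simp only [Matrix.transpose_mul, Matrix.transpose_transpose, Matrix.mul_assoc]
  -- equal characteristic polynomials via determinants
  have hdet : ∀ t : ℝ, ∏ i, (t - specVec hM i) = ∏ i, (t - w i) := by
    intro t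
    have e1 : (t • (1 : Matrix (Fin n) (Fin n) ℝ)) - Matrix.diagonal (specVec hM)
        = R * ((t • 1) - Matrix.diagonal w) * Rᵀ := by
      rw [hconj, Matrix.mul_sub, Matrix.sub_mul]
      congr 1
      calc t • (1 : Matrix (Fin n) (Fin n) ℝ) = t • (R * Rᵀ) := by rw [hRT]
        _ = R * (t • (1 : Matrix (Fin n) (Fin n) ℝ)) * Rᵀ := by
            rw [Matrix.mul_smul, Matrix.smul_mul, mul_one]
    have e2 := congrArg Matrix.det e1
    rw [Matrix.det_mul, Matrix.det_mul] at e2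
    have hdetR : R.det * Rᵀ.det = 1 := by
      rw [← Matrix.det_mul, hRT, Matrix.det_one]
    have e3 : ((t • (1:Matrix (Fin n) (Fin n) ℝ)) - Matrix.diagonal (specVec hM)).det
        = ((t • 1) - Matrix.diagonal w).det := by
      rw [e2]
      calc R.det * ((t • 1 : Matrix (Fin n) (Fin n) ℝ) - Matrix.diagonal w).det * Rᵀ.det
          = ((t • 1 : Matrix (Fin n) (Fin n) ℝ) - Matrix.diagonal w).det * (R.det * Rᵀ.det) := by
            ring
        _ = _ := by rw [hdetR, mul_one]
    have ed : ∀ v : Fin n → ℝ, ((t • (1:Matrix (Fin n) (Fin n) ℝ)) - Matrix.diagonal v).det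
        = ∏ i, (t - v i) := by
      intro v
      rw [show (t • (1:Matrix (Fin n) (Fin n) ℝ)) - Matrix.diagonal v
          = Matrix.diagonal (fun i => t - v i) by
        ext i j; by_cases h : i = j <;> simp [h, Matrix.diagonal_apply, Matrix.one_apply]]
      exact Matrix.det_diagonal
    rw [ed, ed] at e3; exact e3
  -- multiset equality via polynomials
  have hmul : Multiset.map (specVec hM) Finset.univ.val = Multiset.map w Finset.univ.val := by
    have hpoly : (Multiset.map (fun a => Polynomial.X - Polynomial.C a)
        (Multiset.map (specVec hM) Finset.univ.val)).prod
        = (Multiset.map (fun a => Polynomial.X - Polynomial.C a)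
        (Multiset.map w Finset.univ.val)).prod := by
      apply Polynomial.funext
      intro t
      simp only [Polynomial.eval_multiset_prod, Multiset.map_map, Function.comp,
        Polynomial.eval_sub, Polynomial.eval_X, Polynomial.eval_C]
      have : ∀ v : Fin n → ℝ, (Multiset.map (fun i => t - v i) Finset.univ.val).prod
          = ∏ i, (t - v i) := fun v => rfl
      rw [this, this]; exact hdet t
    have := congrArg Polynomial.roots hpoly
    rwa [Polynomial.roots_multiset_prod_X_sub_C, Polynomial.roots_multiset_prod_X_sub_C] at this
  exact eq_of_antitone_of_multiset_eq (antitone_specVec hM) hw hmul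

lemma sum_specVec_eq_trace {n : ℕ} {M : Matrix (Fin n) (Fin n) ℝ} (hM : M.IsHermitian) :
    ∑ i, specVec hM i = M.trace := by
  obtain ⟨Q, hQ1, hQ2, hQ3⟩ := spectral' hM
  have : (Qᵀ * M * Q).trace = M.trace := by
    rw [Matrix.mul_assoc, Matrix.trace_mul_comm, Matrix.mul_assoc M Q Qᵀ, hQ2, Matrix.mul_one]
  rw [← this, hQ3, Matrix.trace_diagonal]
lemma card_filter_lt {n k : ℕ} (hk : k ≤ n) :
    (univ.filter (fun i : Fin n => (i : ℕ) < k)).card = k := by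
  have : univ.filter (fun i : Fin n => (i : ℕ) < k)
      = (Finset.range k).attachFin (fun m hm => lt_of_lt_of_le (Finset.mem_range.mp hm) hk) := by
    ext i; simp
  rw [this, Finset.card_attachFin, Finset.card_range]

lemma bathtub {n : ℕ} {μ c : Fin n → ℝ} (hμ : Antitone μ)
    (h0 : ∀ i, 0 ≤ c i) (h1 : ∀ i, c i ≤ 1) {k : ℕ} (hk : k ≤ n)
    (hs : ∑ i, c i = k) :
    ∑ i, μ i * c i ≤ ∑ i ∈ univ.filter (fun i : Fin n => (i : ℕ) < k), μ i := by
  rcases lt_or_eq_of_le hk with hkn | hkn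
  · set t := μ ⟨k, hkn⟩ with ht
    set S := univ.filter (fun i : Fin n => (i : ℕ) < k) with hSdef
    have hA := Finset.sum_filter_add_sum_filter_not univ (fun i : Fin n => (i : ℕ) < k)
      (fun i => μ i * c i)
    have hB := Finset.sum_filter_add_sum_filter_not univ (fun i : Fin n => (i : ℕ) < k)
      (fun i => c i)
    have hcard : S.card = k := card_filter_lt hk
    have hS0 : ∑ i ∈ S, (μ i - t) * (c i - 1) ≤ 0 := by
      apply Finset.sum_nonpos
      intro i hi
      have hik : (i : ℕ) < k := by simpa [hSdef] using hi
      have : t ≤ μ i := hμ (by simp [Fin.le_def]; omega)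
      exact mul_nonpos_of_nonneg_of_nonpos (by linarith) (by linarith [h1 i])
    have hT0 : ∑ i ∈ univ.filter (fun i : Fin n => ¬ (i : ℕ) < k), (μ i - t) * c i ≤ 0 := by
      apply Finset.sum_nonpos
      intro i hi
      have hik : ¬ (i : ℕ) < k := by simpa using hi
      have : μ i ≤ t := hμ (by simp [Fin.le_def]; omega)
      exact mul_nonpos_of_nonpos_of_nonneg (by linarith) (h0 i)
    have eS : ∑ i ∈ S, (μ i - t) * (c i - 1)
        = ∑ i ∈ S, μ i * c i - ∑ i ∈ S, μ i - t * ∑ i ∈ S, c i + t * k := by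
      have : ∀ i ∈ S, (μ i - t) * (c i - 1) = μ i * c i - μ i - t * c i + t := by
        intro i _; ring
      rw [Finset.sum_congr rfl this]
      simp only [Finset.sum_add_distrib, Finset.sum_sub_distrib, Finset.sum_const, ← Finset.mul_sum,
        nsmul_eq_mul, hcard]
      ring
    have eT : ∑ i ∈ univ.filter (fun i : Fin n => ¬ (i : ℕ) < k), (μ i - t) * c i
        = ∑ i ∈ univ.filter (fun i : Fin n => ¬ (i : ℕ) < k), μ i * c i
          - t * ∑ i ∈ univ.filter (fun i : Fin n => ¬ (i : ℕ) < k), c i := by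
      have : ∀ i ∈ univ.filter (fun i : Fin n => ¬ (i : ℕ) < k),
          (μ i - t) * c i = μ i * c i - t * c i := by intro i _; ring
      rw [Finset.sum_congr rfl this]
      simp only [Finset.sum_sub_distrib, ← Finset.mul_sum]
    simp only [← hSdef] at hA hB
    have hBt : t * ∑ i ∈ S, c i + t * ∑ i ∈ univ.filter (fun i : Fin n => ¬ (i : ℕ) < k), c i
        = t * k := by rw [← mul_add, hB, hs]
    linarith [hS0, hT0, eS, eT]
  · subst hkn
    have hall : ∀ i, c i = 1 := by
      by_contra hcon
      push_neg at hcon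
      obtain ⟨i0, hi0⟩ := hcon
      have : ∑ i, c i < ∑ i : Fin k, (1 : ℝ) := by
        apply Finset.sum_lt_sum (fun i _ => h1 i) ⟨i0, Finset.mem_univ _, lt_of_le_of_ne (h1 i0) hi0⟩
      simp [hs] at this
    have hfilt : univ.filter (fun i : Fin k => (i : ℕ) < k) = univ := by
      ext i; simp [i.isLt]
    rw [hfilt]
    apply le_of_eq
    exact Finset.sum_congr rfl (fun i _ => by rw [hall i, mul_one])

lemma kyfan_bound {n : ℕ} {M : Matrix (Fin n) (Fin n) ℝ} (hM : M.IsHermitian)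
    {Q : Matrix (Fin n) (Fin n) ℝ} (hQ1 : Qᵀ * Q = 1) (hQ2 : Q * Qᵀ = 1)
    (S : Finset (Fin n)) :
    ∑ j ∈ S, (Qᵀ * M * Q) j j
      ≤ ∑ i ∈ univ.filter (fun i : Fin n => (i : ℕ) < S.card), specVec hM i := by
  obtain ⟨Q0, h01, h02, h03⟩ := spectral' hM
  set μ := specVec hM with hμdef
  have hMQ : M = Q0 * Matrix.diagonal μ * Q0ᵀ := by
    rw [← h03]
    calc M = (Q0 * Q0ᵀ) * M * (Q0 * Q0ᵀ) := by rw [h02]; simp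
      _ = Q0 * (Q0ᵀ * M * Q0) * Q0ᵀ := by simp only [Matrix.mul_assoc]
  set R := Qᵀ * Q0 with hR
  have hRRT : R * Rᵀ = 1 := by
    rw [hR, Matrix.transpose_mul, Matrix.transpose_transpose]
    calc Qᵀ * Q0 * (Q0ᵀ * Q) = Qᵀ * (Q0 * Q0ᵀ) * Q := by simp only [Matrix.mul_assoc]
      _ = 1 := by rw [h02, mul_one, hQ1]
  have hRTR : Rᵀ * R = 1 := mul_eq_one_comm.mp hRRT
  have hconj : Qᵀ * M * Q = R * Matrix.diagonal μ * Rᵀ := by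
    rw [hMQ, hR]
    simp only [Matrix.transpose_mul, Matrix.transpose_transpose, Matrix.mul_assoc]
  have hentry : ∀ j, (Qᵀ * M * Q) j j = ∑ i, μ i * (R j i)^2 := by
    intro j
    rw [hconj]
    rw [Matrix.mul_apply]
    congr 1; funext i
    rw [Matrix.mul_diagonal, Matrix.transpose_apply]
    ring
  set c : Fin n → ℝ := fun i => ∑ j ∈ S, (R j i)^2 with hc
  have hcol : ∀ i, ∑ j, (R j i)^2 = 1 := by
    intro i
    have := congrFun (congrFun hRTR i) i
    simp only [Matrix.mul_apply, Matrix.transpose_apply, Matrix.one_apply_eq] at this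
    rw [← this]
    congr 1; funext j; ring
  have h0 : ∀ i, 0 ≤ c i := fun i => Finset.sum_nonneg fun j _ => sq_nonneg _
  have h1 : ∀ i, c i ≤ 1 := by
    intro i
    rw [← hcol i]
    exact Finset.sum_le_sum_of_subset_of_nonneg (Finset.subset_univ S)
      (fun j _ _ => sq_nonneg _)
  have hrow : ∀ j, ∑ i, (R j i)^2 = 1 := by
    intro j
    have := congrFun (congrFun hRRT j) j
    simp only [Matrix.mul_apply, Matrix.transpose_apply, Matrix.one_apply_eq] at this
    rw [← this]
    congr 1; funext i; ring
  have hsum : ∑ i, c i = (S.card : ℝ) := by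
    rw [hc]
    rw [Finset.sum_comm]
    rw [Finset.sum_congr rfl (fun j _ => hrow j)]
    simp
  have hLHS : ∑ j ∈ S, (Qᵀ * M * Q) j j = ∑ i, μ i * c i := by
    rw [Finset.sum_congr rfl (fun j _ => hentry j), Finset.sum_comm]
    congr 1; funext i
    rw [hc, Finset.mul_sum]
  rw [hLHS]
  exact bathtub (antitone_specVec hM) h0 h1
    (by simpa using Finset.card_le_univ S) hsum

theorem stmt13 {n : ℕ} {A B Xbar : Matrix (Fin n) (Fin n) ℝ}
    (hA : A.IsHermitian) (hB : B.IsHermitian) (hXbar : Xbar.IsHermitian)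
    (f : (Fin n → ℝ) → ℝ)
    (hsymm : ∀ (σ : Equiv.Perm (Fin n)) (u : Fin n → ℝ), f (u ∘ σ) = f u)
    (hschur : ∀ u v : Fin n → ℝ, Maj u v → f u ≤ f v)
    (hspec : specVec hXbar = specVec hB)
    (hcomm : StrongCommute hA.neg hXbar) :
    ∀ (X : Matrix (Fin n) (Fin n) ℝ) (hX : X.IsHermitian), specVec hX = specVec hB →
      f (specVec (hX.sub hA)) ≤ f (specVec (hXbar.sub hA)) := by
  intro X hX hXB
  obtain ⟨U, hUUt, hUA, hUX⟩ := hcomm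
  set w : Fin n → ℝ := fun i => specVec hXbar i + specVec hA.neg i with hwdef
  have hwa : Antitone w := fun i j h =>
    add_le_add (antitone_specVec hXbar h) (antitone_specVec hA.neg h)
  have hMbar : Uᵀ * (Xbar - A) * U = Matrix.diagonal w := by
    have hsplit : Uᵀ * (Xbar - A) * U = Uᵀ * Xbar * U + Uᵀ * (-A) * U := by
      noncomm_ring
    rw [hsplit, hUX, hUA, Matrix.diagonal_add]
  have hspecMbar : specVec (hXbar.sub hA) = w :=
    specVec_eq_of_conj (hXbar.sub hA) hUUt hMbar hwa
  apply hschur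
  constructor
  · -- partial sums
    intro k
    rw [dsort_specVec, dsort_specVec]
    set k' := min k n with hk'
    have hkk' : univ.filter (fun i : Fin n => (i : ℕ) < k)
        = univ.filter (fun i : Fin n => (i : ℕ) < k') := by
      ext i; simp only [Finset.mem_filter, Finset.mem_univ, true_and]
      have := i.isLt; omega
    rw [hkk']
    set S := univ.filter (fun i : Fin n => (i : ℕ) < k') with hSdef
    have hScard : S.card = k' := card_filter_lt (min_le_right k n)
    obtain ⟨Q, hQ1, hQ2, hQ3⟩ := spectral' (hX.sub hA)
    have hLHS : ∑ i ∈ S, specVec (hX.sub hA) i = ∑ j ∈ S, (Qᵀ * (X - A) * Q) j j := by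
      rw [hQ3]
      exact Finset.sum_congr rfl (fun j _ => by rw [Matrix.diagonal_apply_eq])
    have hdiagsplit : ∀ j, (Qᵀ * (X - A) * Q) j j
        = (Qᵀ * X * Q) j j + (Qᵀ * (-A) * Q) j j := by
      intro j
      have : Qᵀ * (X - A) * Q = Qᵀ * X * Q + Qᵀ * (-A) * Q := by noncomm_ring
      rw [this]; rfl
    have hb1 := kyfan_bound hX hQ1 hQ2 S
    have hb2 := kyfan_bound hA.neg hQ1 hQ2 S
    rw [hScard] at hb1 hb2
    have hXeq : specVec hX = specVec hXbar := by rw [hXB, hspec]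
    calc ∑ i ∈ S, specVec (hX.sub hA) i
        = ∑ j ∈ S, (Qᵀ * X * Q) j j + ∑ j ∈ S, (Qᵀ * (-A) * Q) j j := by
          rw [hLHS, Finset.sum_congr rfl (fun j _ => hdiagsplit j), Finset.sum_add_distrib]
      _ ≤ ∑ i ∈ S, specVec hX i + ∑ i ∈ S, specVec hA.neg i := add_le_add hb1 hb2
      _ = ∑ i ∈ S, specVec (hXbar.sub hA) i := by
          rw [hXeq, hspecMbar, ← Finset.sum_add_distrib]
  · -- total sums
    have h1 : ∑ i, specVec (hX.sub hA) i = (X - A).trace := sum_specVec_eq_trace _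
    have h2 : ∑ i, specVec (hXbar.sub hA) i = (Xbar - A).trace := sum_specVec_eq_trace _
    have h3 : X.trace = Xbar.trace := by
      rw [← sum_specVec_eq_trace hX, ← sum_specVec_eq_trace hXbar, hXB, hspec]
    rw [h1, h2, Matrix.trace_sub, Matrix.trace_sub, h3]
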